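/- Fix a real number m ≥ 1. There exists a unique ρ* ∈ (0, e^{−1/2}) satisfying (ρ*)² · log(1/ρ*) = 1/(8m); moreover ρ* ≤ 1/2, and ρ* is the unique global minimizer of the function k̃(ρ) = ρ + √(log(1/ρ)/(2m)) over the interval (0, 1/2]. -/

import Mathlib

open Real Set

lemma hasDerivAt_logoneDiv (x : ℝ) (hx : 0 < x) :
    HasDerivAt (fun y : ℝ => Real.log (1/y)) (-x⁻¹) x := by
  have : (fun y : ℝ => Real.log (1/y)) = fun y => -Real.log y := by
    funext y; rw [one_div, Real.log_inv]
  rw [this]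
  exact (Real.hasDerivAt_log hx.ne').neg

lemma hasDerivAt_f (x : ℝ) (hx : 0 < x) :
    HasDerivAt (fun y : ℝ => y^2 * Real.log (1/y)) (2*x*Real.log (1/x) - x) x := by
  have h1 : HasDerivAt (fun y : ℝ => y^2) (2*x) x := by
    simpa using hasDerivAt_pow 2 x
  have h2 := hasDerivAt_logoneDiv x hx
  have h := h1.mul h2
  refine h.congr_deriv ?_
  field_simp
  ring

set_option maxHeartbeats 1000000 in
/-- For fixed real `m ≥ 1` there is a unique `ρ* ∈ (0, e^{−1/2})` with
`ρ*²·log(1/ρ*) = 1/(8m)`; moreover `ρ* ≤ 1/2` and `ρ*` is the unique global minimizer of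
`k̃(ρ) = ρ + √(log(1/ρ)/(2m))` on `(0, 1/2]`. -/
theorem min_orderStat_optimal_rho
    (m : ℝ) (hm : 1 ≤ m) :
    ∃ ρstar : ℝ, ρstar ∈ Set.Ioo 0 (Real.exp (-(1/2))) ∧
      ρstar^2 * Real.log (1/ρstar) = 1/(8*m) ∧
      (∀ ρ ∈ Set.Ioo 0 (Real.exp (-(1/2))),
        ρ^2 * Real.log (1/ρ) = 1/(8*m) → ρ = ρstar) ∧
      ρstar ≤ 1/2 ∧
      (∀ ρ ∈ Set.Ioc (0:ℝ) (1/2), ρ ≠ ρstar →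
        ρstar + Real.sqrt (Real.log (1/ρstar) / (2 * m)) <
          ρ + Real.sqrt (Real.log (1/ρ) / (2 * m))) := by
  have hm0 : (0:ℝ) < m := lt_of_lt_of_le one_pos hm
  set b : ℝ := Real.exp (-(1/2)) with hb
  have hb_half : (1:ℝ)/2 < b := by
    have := Real.add_one_lt_exp (x := -(1/2)) (by norm_num)
    linarith
  set f : ℝ → ℝ := fun y => y^2 * Real.log (1/y) with hf
  -- strict mono of f on Ioo 0 b
  have hmono : StrictMonoOn f (Set.Ioo 0 b) := by
    apply strictMonoOn_of_deriv_pos (convex_Ioo 0 b)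
    · exact fun x hx => ((hasDerivAt_f x hx.1).continuousAt).continuousWithinAt
    · intro x hx
      rw [interior_Ioo] at hx
      rw [(hasDerivAt_f x hx.1).deriv]
      have hlog : Real.log (1/x) = -Real.log x := by rw [one_div, Real.log_inv]
      have hxlt : Real.log x < -(1/2) := by
        rw [← Real.exp_lt_exp (x := Real.log x), Real.exp_log hx.1]
        exact hx.2
      nlinarith [hx.1]
  -- existence via IVT on [a, 1/2]
  set a : ℝ := 1/(16*m) with ha
  have ha0 : 0 < a := by positivity
  have ha16 : a ≤ 1/16 := by
    rw [ha, div_le_div_iff₀ (by positivity) (by norm_num)]; nlinarith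
  have hfa : f a < 1/(8*m) := by
    have hlog : Real.log (1/a) ≤ 1/a - 1 := Real.log_le_sub_one_of_pos (by positivity)
    have : f a ≤ a^2 * (1/a - 1) := by
      apply mul_le_mul_of_nonneg_left hlog (by positivity)
    have h2 : a^2 * (1/a - 1) = a - a^2 := by field_simp
    rw [h2] at this
    have : f a < a := by nlinarith
    rw [ha] at this ⊢
    calc f (1/(16*m)) < 1/(16*m) := this
      _ < 1/(8*m) := by
        rw [div_lt_div_iff₀ (by positivity) (by positivity)]; nlinarith
  have hfhalf : 1/(8*m) < f (1/2) := by
    have : f (1/2) = (1/4) * Real.log 2 := by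
      rw [hf]; norm_num
    rw [this]
    have hl2 : (0.6931471803:ℝ) < Real.log 2 := Real.log_two_gt_d9
    have : 1/(8*m) ≤ 1/8 := by
      rw [div_le_div_iff₀ (by positivity) (by norm_num)]; nlinarith
    nlinarith
  have hcont : ContinuousOn f (Set.Icc a (1/2)) := fun x hx =>
    ((hasDerivAt_f x (lt_of_lt_of_le ha0 hx.1)).continuousAt).continuousWithinAt
  have hIVT := intermediate_value_Ioo (le_trans ha16 (by norm_num)) hcont
  obtain ⟨ρs, hρs_mem, hρs_eq⟩ := hIVT ⟨hfa, hfhalf⟩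
  have hρs_pos : 0 < ρs := lt_trans ha0 hρs_mem.1
  have hρs_half : ρs < 1/2 := hρs_mem.2
  have hρs_b : ρs ∈ Set.Ioo 0 b := ⟨hρs_pos, lt_trans hρs_half hb_half⟩
  refine ⟨ρs, hρs_b, hρs_eq, ?_, le_of_lt hρs_half, ?_⟩
  · intro ρ hρ hρeq
    exact hmono.injOn hρ hρs_b (hρeq.trans hρs_eq.symm)
  · -- minimizer part
    set k : ℝ → ℝ := fun y => y + Real.sqrt (Real.log (1/y) / (2*m)) with hk
    -- derivative of k
    have hkderiv : ∀ x : ℝ, 0 < x → x < 1 →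
        HasDerivAt k (1 - 1/(4*m*x*Real.sqrt (Real.log (1/x)/(2*m)))) x := by
      intro x hx0 hx1
      have hL : 0 < Real.log (1/x) := by
        rw [one_div]
        exact Real.log_pos ((one_lt_inv_iff₀).mpr ⟨hx0, hx1⟩)
      have hg : HasDerivAt (fun y : ℝ => Real.log (1/y) / (2*m)) (-x⁻¹/(2*m)) x :=
        (hasDerivAt_logoneDiv x hx0).div_const (2*m)
      have hgx : Real.log (1/x) / (2*m) ≠ 0 := by positivity
      have hs := (Real.hasDerivAt_sqrt hgx).comp x hg
      have hsum := (hasDerivAt_id x).add hs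
      have hspos : 0 < Real.sqrt (Real.log (1/x)/(2*m)) := Real.sqrt_pos.mpr (by positivity)
      refine hsum.congr_deriv ?_
      field_simp
      ring
    have hkey : ∀ x : ℝ, 0 < x → x < 1 →
        (4*m*x*Real.sqrt (Real.log (1/x)/(2*m)))^2 = 8*m*(f x) ∧
        0 < 4*m*x*Real.sqrt (Real.log (1/x)/(2*m)) := by
      intro x hx0 hx1
      have hL : 0 < Real.log (1/x) := Real.log_pos (by
        rw [one_div]; exact (one_lt_inv_iff₀).mpr ⟨hx0, hx1⟩)
      have hs2 : Real.sqrt (Real.log (1/x)/(2*m))^2 = Real.log (1/x)/(2*m) :=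
        Real.sq_sqrt (by positivity)
      constructor
      · rw [mul_pow, mul_pow, hs2, hf]
        field_simp
        ring
      · have : 0 < Real.sqrt (Real.log (1/x)/(2*m)) := Real.sqrt_pos.mpr (by positivity)
        positivity
    have hanti : StrictAntiOn k (Set.Ioc 0 ρs) := by
      apply strictAntiOn_of_deriv_neg (convex_Ioc 0 ρs)
      · intro x hx
        exact ((hkderiv x hx.1 (by linarith [hx.2, hρs_half])).continuousAt).continuousWithinAt
      · intro x hx
        rw [interior_Ioc] at hx
        have hx1 : x < 1 := by linarith [hx.2, hρs_half]
        rw [(hkderiv x hx.1 hx1).deriv]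
        obtain ⟨hsq, hu⟩ := hkey x hx.1 hx1
        set u := 4*m*x*Real.sqrt (Real.log (1/x)/(2*m)) with hu_def
        have hfx : f x < 1/(8*m) := by
          have := hmono ⟨hx.1, lt_trans hx.2 hρs_b.2⟩ hρs_b hx.2
          rwa [hρs_eq] at this
        have h1 : u^2 < 1 := by
          rw [hsq]
          have := (lt_div_iff₀ (show (0:ℝ) < 8*m by positivity)).mp hfx
          linarith
        have hult : u < 1 := by nlinarith
        have : 1 < 1/u := by rw [lt_div_iff₀ hu]; linarith
        linarith
    have hmono' : StrictMonoOn k (Set.Icc ρs (1/2)) := by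
      apply strictMonoOn_of_deriv_pos (convex_Icc ρs (1/2))
      · intro x hx
        exact ((hkderiv x (lt_of_lt_of_le hρs_pos hx.1) (by linarith [hx.2])).continuousAt).continuousWithinAt
      · intro x hx
        rw [interior_Icc] at hx
        have hx0 : 0 < x := lt_trans hρs_pos hx.1
        have hx1 : x < 1 := by linarith [hx.2]
        rw [(hkderiv x hx0 hx1).deriv]
        obtain ⟨hsq, hu⟩ := hkey x hx0 hx1
        set u := 4*m*x*Real.sqrt (Real.log (1/x)/(2*m)) with hu_def
        have hfx : 1/(8*m) < f x := by
          have := hmono hρs_b ⟨hx0, lt_trans hx.2 hb_half⟩ hx.1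
          rwa [hρs_eq] at this
        have h1 : 1 < u^2 := by
          rw [hsq]
          have := (div_lt_iff₀ (show (0:ℝ) < 8*m by positivity)).mp hfx
          linarith
        have hult : 1 < u := by nlinarith
        have : 1/u < 1 := by rw [div_lt_one hu]; exact hult
        linarith
    intro ρ hρ hne
    rcases lt_or_gt_of_ne hne with h | h
    · exact hanti ⟨hρ.1, le_of_lt h⟩ ⟨hρs_pos, le_refl ρs⟩ h
    · exact hmono' ⟨le_refl ρs, le_of_lt hρs_half⟩ ⟨le_of_lt h, hρ.2⟩ h
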